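/- arXiv:2005.04744 — 4 statements merged into one kernel-verified Lean document; each statement's English description precedes it below -/
import Mathlib

section
/- Consider the real recursion κ₁ = c with 0 < c < 1/4 and κ_{i+1} = c(1 + κ_i)². Then the sequence (κ_i) is strictly increasing and converges to κ = 2c / (1 - 2c + √(1 - 4c)), and κ < 1, and κ_i < κ for all i ≥ 1. -/
/-- The recursion `κ₁ = c`, `κ_{i+1} = c(1 + κ_i)²` with `0 < c < 1/4`
is strictly increasing and converges to `κ = 2c / (1 - 2c + √(1 - 4c))`, with `κ < 1`
and `κ_i < κ` for all `i ≥ 1`. -/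
theorem kappa_recursion_convergence (c : ℝ) (hc0 : 0 < c) (hc : c < 1/4)
    (κ : ℕ → ℝ) (h1 : κ 1 = c) (hrec : ∀ i ≥ 1, κ (i + 1) = c * (1 + κ i) ^ 2) :
    (∀ i ≥ 1, κ i < κ (i + 1)) ∧
    Filter.Tendsto κ Filter.atTop
      (nhds (2 * c / (1 - 2 * c + Real.sqrt (1 - 4 * c)))) ∧
    2 * c / (1 - 2 * c + Real.sqrt (1 - 4 * c)) < 1 ∧
    (∀ i ≥ 1, κ i < 2 * c / (1 - 2 * c + Real.sqrt (1 - 4 * c))) := by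
  set s := Real.sqrt (1 - 4 * c) with hs_def
  have hs0 : 0 ≤ s := Real.sqrt_nonneg _
  have hs2 : s ^ 2 = 1 - 4 * c := Real.sq_sqrt (by linarith)
  set K := 2 * c / (1 - 2 * c + s) with hK_def
  have hd : 0 < 1 - 2 * c + s := by linarith
  have hK0 : 0 < K := by positivity
  have hK1 : K < 1 := by
    rw [hK_def, div_lt_one hd]; linarith
  have hfix : c * (1 + K) ^ 2 = K := by
    rw [hK_def, one_add_div hd.ne', div_pow, mul_div_assoc', div_eq_div_iff (by positivity) hd.ne']; linear_combination c * (1 - 2 * c + s) * hs2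
  -- step lemma
  have hstep : ∀ x : ℝ, 0 ≤ x → x < K → x < c * (1 + x) ^ 2 ∧ c * (1 + x) ^ 2 < K := by
    intro x hx0 hxK
    constructor
    · have h2 : 0 < 1 - 2 * c - c * (x + K) := by nlinarith
      nlinarith [mul_pos (sub_pos.mpr hxK) h2]
    · have hsq : (1 + x) ^ 2 < (1 + K) ^ 2 := by nlinarith
      calc c * (1 + x) ^ 2 < c * (1 + K) ^ 2 := by
            exact mul_lt_mul_of_pos_left hsq hc0
        _ = K := hfix
  have hcK : c < K := by nlinarith [hfix, hK0, mul_pos hc0 hK0, mul_pos (mul_pos hc0 hK0) hK0]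
  -- bounds by induction
  have hbound : ∀ i, 1 ≤ i → 0 ≤ κ i ∧ κ i < K := by
    intro i hi
    induction i with
    | zero => omega
    | succ n ih =>
      rcases Nat.lt_or_ge 1 (n + 1) with h | h
      · have hn1 : 1 ≤ n := by omega
        obtain ⟨h0, hK'⟩ := ih hn1
        rw [hrec n hn1]
        exact ⟨by positivity, (hstep _ h0 hK').2⟩
      · have : n + 1 = 1 := by omega
        rw [this, h1]; exact ⟨le_of_lt hc0, hcK⟩
  have hmono : ∀ i ≥ 1, κ i < κ (i + 1) := by
    intro i hi
    obtain ⟨h0, hK'⟩ := hbound i hi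
    rw [hrec i hi]
    exact (hstep _ h0 hK').1
  have hlt : ∀ i ≥ 1, κ i < K := fun i hi => (hbound i hi).2
  -- convergence
  set g : ℕ → ℝ := fun n => κ (n + 1) with hg_def
  have hgmono : Monotone g := monotone_nat_of_le_succ fun n =>
    le_of_lt (hmono (n + 1) (by omega))
  have hgbdd : BddAbove (Set.range g) := ⟨K, by
    rintro x ⟨n, rfl⟩; exact le_of_lt (hlt (n + 1) (by omega))⟩
  set L := ⨆ n, g n with hL_def
  have htend : Filter.Tendsto g Filter.atTop (nhds L) :=
    tendsto_atTop_ciSup hgmono hgbdd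
  have hLleK : L ≤ K := ciSup_le fun n => le_of_lt (hlt (n + 1) (by omega))
  have htend2 : Filter.Tendsto (fun n => g (n + 1)) Filter.atTop (nhds L) :=
    htend.comp (Filter.tendsto_add_atTop_nat 1)
  have heq : (fun n => g (n + 1)) = fun n => c * (1 + g n) ^ 2 := by
    funext n
    exact hrec (n + 1) (by omega)
  have htend3 : Filter.Tendsto (fun n => c * (1 + g n) ^ 2) Filter.atTop
      (nhds (c * (1 + L) ^ 2)) := by
    exact (Filter.Tendsto.const_mul c (((tendsto_const_nhds.add htend)).pow 2))
  have hLfix : c * (1 + L) ^ 2 = L := by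
    have := tendsto_nhds_unique (heq ▸ htend2) htend3
    linarith [this]
  have hLK : L = K := by
    have hfac : (L - K) * (c * (L + K) + 2 * c - 1) = 0 := by
      linear_combination hLfix - hfix
    rcases mul_eq_zero.mp hfac with h | h
    · linarith
    · exfalso; nlinarith [hLleK, hK1]
  have : Filter.Tendsto κ Filter.atTop (nhds K) := by
    rw [← Filter.tendsto_add_atTop_iff_nat 1]
    exact hLK ▸ htend
  exact ⟨hmono, this, hK1, hlt⟩
end

section
/- Let E ∈ ℂ^{n×n} be Hermitian positive definite and let Δ_E ∈ ℂ^{n×n} be a perturbation such that E + Δ_E is invertible. Let Z₂₂ = U be the unitary polar factor of E + Δ_E (so E + Δ_E = U P with P Hermitian positive definite). If ‖Δ_E‖₂ < σ_min(E), then ‖U - I‖_F ≤ 2 ‖E^{-1}‖₂ ‖Δ_E‖_F. -/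
open Matrix ComplexOrder

/-- The Frobenius norm of a complex matrix. -/
noncomputable def frob {m n : Type*} [Fintype m] [Fintype n] (M : Matrix m n ℂ) : ℝ :=
  Real.sqrt (∑ i, ∑ j, ‖M i j‖ ^ 2)

/-- The spectral norm (largest singular value) of a complex matrix. -/
noncomputable def specNorm {ι : Type*} [Fintype ι] [DecidableEq ι]
    (M : Matrix ι ι ℂ) : ℝ :=
  ‖Matrix.toEuclideanCLM (𝕜 := ℂ) M‖

/-- The smallest singular value of a square complex matrix. -/
noncomputable def sigmaMin {ι : Type*} [Fintype ι] [DecidableEq ι]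
    (M : Matrix ι ι ℂ) : ℝ :=
  sInf {r | ∃ x : EuclideanSpace ℂ ι, ‖x‖ = 1 ∧ r = ‖Matrix.toEuclideanCLM (𝕜 := ℂ) M x‖}

/- ====================== Auxiliary lemmas ====================== -/

lemma star_mul_self_re' (z : ℂ) : (star z * z).re = ‖z‖^2 := by
  rw [Complex.star_def, ← Complex.normSq_eq_conj_mul_self, ← Complex.sq_norm]
  rw [Complex.ofReal_re]

lemma dot_star_self_re' {ι : Type*} [Fintype ι] (y : ι → ℂ) :
    (star y ⬝ᵥ y).re = ∑ i, ‖y i‖ ^ 2 := by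
  simp only [dotProduct, Pi.star_apply, Complex.re_sum]
  exact Finset.sum_congr rfl fun i _ => star_mul_self_re' (y i)

lemma clm_ne_zero' {ι : Type*} [Fintype ι] [DecidableEq ι] {M : Matrix ι ι ℂ} (hM : M ≠ 0) :
    Matrix.toEuclideanCLM (𝕜 := ℂ) M ≠ 0 := by
  intro h
  apply hM
  have h2 := congrArg (⇑(Matrix.toEuclideanCLM (𝕜 := ℂ) (n := ι)).symm) h
  simpa using h2

lemma specNorm_inv_pos' {ι : Type*} [Fintype ι] [DecidableEq ι] [Nonempty ι]
    {E : Matrix ι ι ℂ} (hE : E.PosDef) : 0 < specNorm E⁻¹ := by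
  have hdet : IsUnit E.det := hE.det_pos.ne'.isUnit
  have h1 : E⁻¹ * E = 1 := nonsing_inv_mul E hdet
  have hne : E⁻¹ ≠ 0 := by
    intro h
    rw [h, zero_mul] at h1
    exact one_ne_zero h1.symm
  exact norm_pos_iff.2 (clm_ne_zero' hne)

open scoped MatrixOrder in
lemma quad_lower' {ι : Type*} [Fintype ι] [DecidableEq ι] {E : Matrix ι ι ℂ}
    (hE : E.PosDef) (x : ι → ℂ) :
    (specNorm E⁻¹)⁻¹ * ∑ i, ‖x i‖ ^ 2 ≤ (star x ⬝ᵥ E *ᵥ x).re := by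
  classical
  rcases isEmpty_or_nonempty ι with hι | hι
  · simp [dotProduct]
  set S := CFC.sqrt E with hSdef
  have hSS : S * S = E := CFC.sqrt_mul_sqrt_self E hE.posSemidef.nonneg
  have hSH : Sᴴ = S := (Matrix.nonneg_iff_posSemidef.mp (CFC.sqrt_nonneg E)).1
  have hSdet : IsUnit S.det := by
    have h : S.det * S.det = E.det := by rw [← det_mul, hSS]
    refine isUnit_iff_ne_zero.2 fun h0 => hE.det_pos.ne' ?_
    rw [← h, h0, mul_zero]
  set y := S *ᵥ x with hy
  have hq : star x ⬝ᵥ E *ᵥ x = star y ⬝ᵥ y := by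
    rw [← hSS, ← mulVec_mulVec, dotProduct_mulVec, star_mulVec, hSH]
  rw [hq, dot_star_self_re']
  set X : EuclideanSpace ℂ ι := (WithLp.equiv 2 (ι → ℂ)).symm x with hX
  set Y : EuclideanSpace ℂ ι := (WithLp.equiv 2 (ι → ℂ)).symm y with hY
  set C := Matrix.toEuclideanCLM (𝕜 := ℂ) S⁻¹ with hC
  have hXY : C Y = X := by
    rw [hY, hC, WithLp.equiv_symm_apply, Matrix.toEuclideanCLM_toLp, hX, WithLp.equiv_symm_apply]
    congr 1
    rw [hy, mulVec_mulVec, nonsing_inv_mul S hSdet, one_mulVec]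
  have hnX : ‖X‖^2 = ∑ i, ‖x i‖^2 := by
    rw [EuclideanSpace.norm_eq, Real.sq_sqrt (Finset.sum_nonneg fun i _ => sq_nonneg _)]
    rfl
  have hnY : ‖Y‖^2 = ∑ i, ‖y i‖^2 := by
    rw [EuclideanSpace.norm_eq, Real.sq_sqrt (Finset.sum_nonneg fun i _ => sq_nonneg _)]
    rfl
  have hCsq : ‖C‖^2 = specNorm E⁻¹ := by
    have h1 : star C * C = Matrix.toEuclideanCLM (𝕜 := ℂ) E⁻¹ := by
      rw [hC, ← map_star, ← _root_.map_mul]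
      congr 1
      have h2 : star S⁻¹ = S⁻¹ := by
        show (S⁻¹)ᴴ = S⁻¹
        rw [conjTranspose_nonsing_inv, hSH]
      rw [h2, ← Matrix.mul_inv_rev, hSS]
    have h3 := CStarRing.norm_star_mul_self (x := C)
    rw [specNorm, ← h1, h3, sq]
  have hop : ‖X‖ ≤ ‖C‖ * ‖Y‖ := by rw [← hXY]; exact C.le_opNorm Y
  have hsq : ∑ i, ‖x i‖^2 ≤ specNorm E⁻¹ * ∑ i, ‖y i‖^2 := by
    rw [← hnX, ← hnY, ← hCsq]
    calc ‖X‖^2 ≤ (‖C‖ * ‖Y‖)^2 := by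
          apply pow_le_pow_left₀ (norm_nonneg _) hop
      _ = ‖C‖^2 * ‖Y‖^2 := by ring
  rw [inv_mul_le_iff₀ (specNorm_inv_pos' hE)]
  exact hsq

/-- Embedding of matrices into Euclidean space (vectorization). -/
noncomputable def emb' {m l : Type*} [Fintype m] [Fintype l] (M : Matrix m l ℂ) :
    EuclideanSpace ℂ (m × l) :=
  (WithLp.equiv 2 ((m × l) → ℂ)).symm (fun p => M p.1 p.2)

lemma emb'_apply {m l : Type*} [Fintype m] [Fintype l] (M : Matrix m l ℂ) (p : m × l) :
    emb' M p = M p.1 p.2 := rfl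

lemma emb'_sub {m l : Type*} [Fintype m] [Fintype l] (A B : Matrix m l ℂ) :
    emb' (A - B) = emb' A - emb' B := rfl

lemma emb'_add {m l : Type*} [Fintype m] [Fintype l] (A B : Matrix m l ℂ) :
    emb' (A + B) = emb' A + emb' B := rfl

lemma frob_eq_norm_emb' {m l : Type*} [Fintype m] [Fintype l] (M : Matrix m l ℂ) :
    frob M = ‖emb' M‖ := by
  rw [frob, EuclideanSpace.norm_eq]
  congr 1
  rw [Fintype.sum_prod_type]
  rfl

lemma frob_nonneg' {m l : Type*} [Fintype m] [Fintype l] (M : Matrix m l ℂ) :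
    0 ≤ frob M := Real.sqrt_nonneg _

lemma frob_sq' {m l : Type*} [Fintype m] [Fintype l] (M : Matrix m l ℂ) :
    frob M ^ 2 = ∑ i, ∑ j, ‖M i j‖ ^ 2 :=
  Real.sq_sqrt (Finset.sum_nonneg fun i _ => Finset.sum_nonneg fun j _ => sq_nonneg _)

lemma inner_emb' {m l : Type*} [Fintype m] [Fintype l] (A B : Matrix m l ℂ) :
    (inner ℂ (emb' A) (emb' B) : ℂ) = ∑ i, ∑ j, star (A i j) * B i j := by
  rw [PiLp.inner_apply, Fintype.sum_prod_type]
  simp_rw [RCLike.inner_apply']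
  rfl

lemma sumsq_eq_trace' {m l : Type*} [Fintype m] [Fintype l] (M : Matrix m l ℂ) :
    ∑ i, ∑ j, ‖M i j‖ ^ 2 = ((Mᴴ * M).trace).re := by
  simp only [trace, diag_apply, mul_apply, conjTranspose_apply, Complex.re_sum]
  rw [Finset.sum_comm]
  refine Finset.sum_congr rfl fun i _ => Finset.sum_congr rfl fun j _ => ?_
  exact (star_mul_self_re' _).symm

lemma frob_conjTranspose' {m l : Type*} [Fintype m] [Fintype l] (M : Matrix m l ℂ) :
    frob Mᴴ = frob M := by
  rw [frob, frob]
  congr 1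
  rw [Finset.sum_comm]
  refine Finset.sum_congr rfl fun i _ => Finset.sum_congr rfl fun j _ => ?_
  simp [conjTranspose_apply]

lemma frob_mul_unitary {ι : Type*} [Fintype ι] [DecidableEq ι]
    (M U : Matrix ι ι ℂ) (hU : U * Uᴴ = 1) : frob (M * U) = frob M := by
  have htr : ((M * U)ᴴ * (M * U)).trace = (Mᴴ * M).trace := by
    calc ((M * U)ᴴ * (M * U)).trace = (Uᴴ * (Mᴴ * (M * U))).trace := by
          rw [conjTranspose_mul, mul_assoc]
      _ = ((Mᴴ * (M * U)) * Uᴴ).trace := trace_mul_comm _ _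
      _ = (Mᴴ * M).trace := by
          rw [mul_assoc, mul_assoc, hU, mul_one]
  rw [frob, frob, sumsq_eq_trace', sumsq_eq_trace', htr]

/-- If `E` is Hermitian positive definite, `E + Δ` is invertible with
unitary polar factor `U` (so `E + Δ = U P`, `P` Hermitian positive definite), and
`‖Δ‖₂ < σ_min(E)`, then `‖U - I‖_F ≤ 2 ‖E⁻¹‖₂ ‖Δ‖_F`. -/
theorem polar_factor_near_identity (n : ℕ) (E Δ U P : Matrix (Fin n) (Fin n) ℂ)
    (hE : E.PosDef) (hinv : IsUnit (E + Δ).det)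
    (hU : Uᴴ * U = 1 ∧ U * Uᴴ = 1) (hP : P.PosDef)
    (hpolar : E + Δ = U * P)
    (hsmall : specNorm Δ < sigmaMin E) :
    frob (U - 1) ≤ 2 * specNorm E⁻¹ * frob Δ := by
  set W := U - 1 with hW
  set C := Δ - Δᴴ * U with hCdef
  -- The key Sylvester identity
  have hPeq : P = Uᴴ * E + Uᴴ * Δ := by
    calc P = 1 * P := (one_mul P).symm
      _ = (Uᴴ * U) * P := by rw [hU.1]
      _ = Uᴴ * (U * P) := by rw [mul_assoc]
      _ = Uᴴ * (E + Δ) := by rw [← hpolar]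
      _ = Uᴴ * E + Uᴴ * Δ := mul_add _ _ _
  have herm : Uᴴ * E + Uᴴ * Δ = E * U + Δᴴ * U := by
    calc Uᴴ * E + Uᴴ * Δ = P := hPeq.symm
      _ = Pᴴ := hP.isHermitian.symm
      _ = (Uᴴ * E + Uᴴ * Δ)ᴴ := by rw [← hPeq]
      _ = E * U + Δᴴ * U := by
          rw [conjTranspose_add, conjTranspose_mul, conjTranspose_mul,
            conjTranspose_conjTranspose, hE.isHermitian]
  have key : E * W + W * P = C := by
    have expand : E * W + W * P = E * U - E + (U * P - P) := by
      rw [hW, mul_sub, sub_mul, mul_one, one_mul]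
    rw [expand, ← hpolar, hPeq, herm, hCdef]
    abel
  -- Inner-product estimates
  set a := frob W with ha
  set b := frob Δ with hb
  set s := specNorm E⁻¹ with hs
  -- lower bound
  have T1 : s⁻¹ * a ^ 2 ≤ (inner ℂ (emb' W) (emb' (E * W)) : ℂ).re := by
    have hin : (inner ℂ (emb' W) (emb' (E * W)) : ℂ)
        = ∑ j, (star (fun i => W i j) ⬝ᵥ E *ᵥ (fun i => W i j)) := by
      rw [inner_emb', Finset.sum_comm]
      refine Finset.sum_congr rfl fun j _ => Finset.sum_congr rfl fun i _ => ?_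
      simp only [mul_apply, dotProduct, mulVec, Pi.star_apply]
    rw [hin, Complex.re_sum, frob_sq', Finset.sum_comm, Finset.mul_sum]
    exact Finset.sum_le_sum fun j _ => quad_lower' hE _
  have T2 : 0 ≤ (inner ℂ (emb' W) (emb' (W * P)) : ℂ).re := by
    have hin : (inner ℂ (emb' W) (emb' (W * P)) : ℂ)
        = ∑ i, (star (star (fun k => W i k)) ⬝ᵥ P *ᵥ (star (fun k => W i k))) := by
      rw [inner_emb']
      refine Finset.sum_congr rfl fun i _ => ?_
      simp only [mul_apply, dotProduct, mulVec, Pi.star_apply, star_star, Finset.mul_sum]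
      rw [Finset.sum_comm]
      refine Finset.sum_congr rfl fun k _ => Finset.sum_congr rfl fun j _ => ?_
      ring
    rw [hin, Complex.re_sum]
    refine Finset.sum_nonneg fun i _ => ?_
    have := hP.posSemidef.re_dotProduct_nonneg (star (fun k => W i k))
    simpa using this
  have hCle : frob C ≤ 2 * b := by
    have h1 : frob (Δᴴ * U) = b := by
      rw [frob_mul_unitary _ _ hU.2, frob_conjTranspose', hb]
    calc frob C = ‖emb' Δ - emb' (Δᴴ * U)‖ := by
          rw [frob_eq_norm_emb', hCdef, emb'_sub]
      _ ≤ ‖emb' Δ‖ + ‖emb' (Δᴴ * U)‖ := norm_sub_le _ _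
      _ = b + b := by rw [← frob_eq_norm_emb', ← frob_eq_norm_emb', h1, hb]
      _ = 2 * b := by ring
  have main : s⁻¹ * a ^ 2 ≤ a * (2 * b) := by
    calc s⁻¹ * a ^ 2
        ≤ (inner ℂ (emb' W) (emb' (E * W)) : ℂ).re
            + (inner ℂ (emb' W) (emb' (W * P)) : ℂ).re := le_add_of_le_of_nonneg T1 T2
      _ = (inner ℂ (emb' W) (emb' C) : ℂ).re := by
          rw [← key, emb'_add, inner_add_right, Complex.add_re]
      _ ≤ ‖emb' W‖ * ‖emb' C‖ := re_inner_le_norm (𝕜 := ℂ) _ _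
      _ = a * frob C := by rw [← frob_eq_norm_emb', ← frob_eq_norm_emb', ha]
      _ ≤ a * (2 * b) := by
          apply mul_le_mul_of_nonneg_left hCle
          rw [ha]; exact frob_nonneg' _
  -- conclude
  rcases eq_or_lt_of_le (frob_nonneg' W : (0:ℝ) ≤ a) with haz | hapos
  · rw [ha, ← haz]
    have : (0:ℝ) ≤ 2 * s * b := by
      have h1 : (0:ℝ) ≤ s := by rw [hs]; exact norm_nonneg _
      have h2 : (0:ℝ) ≤ b := by rw [hb]; exact frob_nonneg' _
      have h3 : (0:ℝ) ≤ 2 * s := by linarith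
      exact mul_nonneg h3 h2
    linarith
  · have hnontriv : Nonempty (Fin n) := by
      by_contra h
      rw [not_nonempty_iff] at h
      have : a = 0 := by
        rw [ha, frob]
        simp
      exact absurd this hapos.ne'
    have hspos : 0 < s := specNorm_inv_pos' hE
    have h' : a ^ 2 ≤ s * (a * (2 * b)) := by
      rwa [inv_mul_le_iff₀ hspos] at main
    nlinarith [h', hapos]
end

section
/- Let 𝓥 ∈ ℂ^{(n+m)×(n+m)} be skew-Hermitian with block form [[J, G], [-G^H, N]] and 𝓦 ∈ ℂ^{(n+m)×(n+m)} be Hermitian with block form [[R, P], [P^H, S]]. Setting A = J - R, B = G - P, C^H = G + P, D = S - N, the matrix [[-R, -J, G], [-J^H, R, -P], [G^H, -P^H, S]] is the congruence transform X̂^H [[0, A, B], [A^H, 0, C^H], [B^H, C, D^H + D]] X̂ where X̂ = diag((1/√2)[[I, I], [I, -I]], (1/√2)I_m). -/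
open Matrix

/-- With `𝓥 = [[J, G], [-Gᴴ, N]]` skew-Hermitian, `𝓦 = [[R, P], [Pᴴ, S]]`
Hermitian, and `A = J - R`, `B = G - P`, `Cᴴ = G + P`, `D = S - N`, the matrix
`[[-R, -J, G], [-Jᴴ, R, -P], [Gᴴ, -Pᴴ, S]]` equals the congruence transform
`Xhᴴ [[0, A, B], [Aᴴ, 0, Cᴴ], [Bᴴ, C, Dᴴ + D]] Xh`, where
`Xh = diag((1/√2)[[I, I], [I, -I]], (1/√2) I_m)`. -/
theorem pH_congruence_identity (n m : ℕ)
    (J R : Matrix (Fin n) (Fin n) ℂ) (G P : Matrix (Fin n) (Fin m) ℂ)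
    (N S : Matrix (Fin m) (Fin m) ℂ)
    (h𝓥 : (Matrix.fromBlocks J G (-Gᴴ) N)ᴴ = -(Matrix.fromBlocks J G (-Gᴴ) N))
    (h𝓦 : (Matrix.fromBlocks R P Pᴴ S)ᴴ = Matrix.fromBlocks R P Pᴴ S)
    (A : Matrix (Fin n) (Fin n) ℂ) (hA : A = J - R)
    (B : Matrix (Fin n) (Fin m) ℂ) (hB : B = G - P)
    (C : Matrix (Fin m) (Fin n) ℂ) (hC : Cᴴ = G + P)
    (D : Matrix (Fin m) (Fin m) ℂ) (hD : D = S - N)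
    (Xh : Matrix ((Fin n ⊕ Fin n) ⊕ Fin m) ((Fin n ⊕ Fin n) ⊕ Fin m) ℂ)
    (hXh : Xh = Matrix.fromBlocks
      (((Real.sqrt 2 : ℂ))⁻¹ • Matrix.fromBlocks 1 1 1 (-1)) 0 0
      (((Real.sqrt 2 : ℂ))⁻¹ • 1)) :
    Matrix.fromBlocks (Matrix.fromBlocks (-R) (-J) (-Jᴴ) R)
        (Matrix.fromRows G (-P)) (Matrix.fromCols Gᴴ (-Pᴴ)) S =
      Xhᴴ * Matrix.fromBlocks (Matrix.fromBlocks 0 A Aᴴ 0)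
        (Matrix.fromRows B Cᴴ) (Matrix.fromCols Bᴴ C) (Dᴴ + D) * Xh := by
  have hJ : Jᴴ = -J := by
    have := congrArg Matrix.toBlocks₁₁ h𝓥
    simpa [Matrix.fromBlocks_conjTranspose, Matrix.fromBlocks_neg] using this
  have hN : Nᴴ = -N := by
    have := congrArg Matrix.toBlocks₂₂ h𝓥
    simpa [Matrix.fromBlocks_conjTranspose, Matrix.fromBlocks_neg] using this
  have hR : Rᴴ = R := by
    have := congrArg Matrix.toBlocks₁₁ h𝓦
    simpa [Matrix.fromBlocks_conjTranspose] using this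
  have hS : Sᴴ = S := by
    have := congrArg Matrix.toBlocks₂₂ h𝓦
    simpa [Matrix.fromBlocks_conjTranspose] using this
  have hC' : C = Gᴴ + Pᴴ := by
    rw [← conjTranspose_conjTranspose C, hC, conjTranspose_add]
  set c : ℂ := ((Real.sqrt 2 : ℂ))⁻¹ with hc
  have hsc : star c = c := by
    simp [hc, ← Complex.ofReal_inv]
  have hcc : c * c = 2⁻¹ := by
    rw [hc, ← mul_inv, ← Complex.ofReal_mul, Real.mul_self_sqrt (by norm_num)]
    norm_num
  have hZ : Xh = c • Matrix.fromBlocks (Matrix.fromBlocks 1 1 1 (-1)) 0 0 1 := by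
    rw [hXh]; simp [Matrix.fromBlocks_smul]
  rw [hZ, conjTranspose_smul, hsc, Matrix.smul_mul, Matrix.mul_smul, Matrix.smul_mul, smul_smul, hcc]
  rw [Matrix.fromBlocks_conjTranspose, Matrix.fromBlocks_conjTranspose,
    Matrix.fromBlocks_multiply, Matrix.fromBlocks_multiply]
  subst hA hB hD
  rw [hC']
  simp only [Matrix.fromBlocks_multiply, Matrix.fromBlocks_mul_fromRows,
    Matrix.fromCols_mul_fromBlocks, Matrix.conjTranspose_zero, Matrix.conjTranspose_one,
    Matrix.conjTranspose_neg, Matrix.conjTranspose_sub, Matrix.conjTranspose_add,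
    conjTranspose_conjTranspose,
    Matrix.conjTranspose_fromRows_eq_fromCols_conjTranspose,
    Matrix.conjTranspose_fromCols_eq_fromRows_conjTranspose,
    hJ, hN, hR, hS, mul_one, one_mul, mul_zero, zero_mul, add_zero, zero_add,
    Matrix.mul_one, Matrix.one_mul, Matrix.mul_zero, Matrix.zero_mul,
    Matrix.neg_mul, Matrix.mul_neg, neg_neg]
  ext i j
  rcases i with (i|i)|i <;> rcases j with (j|j)|j <;>
    simp <;> ring
end

section
/- Let A_Δ, E_Δ ∈ ℂ^{n×n} and suppose the pencils sE_Δ - A_Δ and -sE_Δ^H - A_Δ^H have no common eigenvalues (including infinity). Then for any skew-Hermitian Δ^𝓔₁₁ and Hermitian Δ^𝓐₁₁ in ℂ^{n×n}, there exists a unique Y₂₁ ∈ ℂ^{n×n} solving the coupled linear equations A_Δ Y₂₁ + Y₂₁^H A_Δ^H = -Δ^𝓐₁₁ and E_Δ Y₂₁ - Y₂₁^H E_Δ^H = -Δ^𝓔₁₁. -/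
open Matrix Polynomial

section Aux

lemma my_eval_charpoly {n : ℕ} (M : Matrix (Fin n) (Fin n) ℂ) (μ : ℂ) :
    (M.charpoly).eval μ = (μ • (1 : Matrix (Fin n) (Fin n) ℂ) - M).det := by
  rw [Matrix.charpoly, ← Polynomial.coe_evalRingHom, RingHom.map_det]
  congr 1
  ext i j
  by_cases h : i = j <;>
    simp [h, charmatrix_apply, Matrix.one_apply, Matrix.diagonal_apply, Matrix.smul_apply,
      Matrix.sub_apply]

lemma my_aeval_comm {n : ℕ} (M N B : Matrix (Fin n) (Fin n) ℂ)
    (h : M * B = B * N) (p : ℂ[X]) :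
    (aeval M p) * B = B * (aeval N p) := by
  induction p using Polynomial.induction_on with
  | C a => simp [Algebra.algebraMap_eq_smul_one, smul_mul_assoc, mul_smul_comm]
  | add p q hp hq => simp [add_mul, mul_add, hp, hq]
  | monomial k a hk =>
      have e : (C a * Polynomial.X ^ (k + 1) : ℂ[X]) = (C a * Polynomial.X ^ k) * Polynomial.X := by
        ring
      rw [e, _root_.map_mul (aeval M) (C a * Polynomial.X ^ k) Polynomial.X,
        _root_.map_mul (aeval N) (C a * Polynomial.X ^ k) Polynomial.X, aeval_X, aeval_X,
        mul_assoc, h, ← mul_assoc, hk, mul_assoc]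

lemma sylvester_injective {n : ℕ} (M : Matrix (Fin n) (Fin n) ℂ)
    (h : ∀ μ : ℂ, (μ • (1 : Matrix (Fin n) (Fin n) ℂ) - M).det = 0 →
      ((-Mᴴ) - μ • (1 : Matrix (Fin n) (Fin n) ℂ)).det ≠ 0)
    (B : Matrix (Fin n) (Fin n) ℂ) (hB : M * B + B * Mᴴ = 0) : B = 0 := by
  have hMB : M * B = B * (-Mᴴ) := by
    rw [add_eq_zero_iff_eq_neg] at hB
    rw [hB]; simp [mul_neg]
  have key := my_aeval_comm M (-Mᴴ) B hMB M.charpoly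
  rw [Matrix.aeval_self_charpoly, zero_mul] at key
  set p := M.charpoly with hp
  have hmonic : p.Monic := M.charpoly_monic
  have hsplit : p.Splits := IsAlgClosed.splits p
  have hprod := hsplit.eq_prod_roots_of_monic hmonic
  set l := p.roots.toList with hl
  have hprodl : p = (l.map fun a => Polynomial.X - C a).prod := by
    rw [hprod, hl, ← Multiset.prod_coe, ← Multiset.map_coe, Multiset.coe_toList]
  have hdet : (aeval (-Mᴴ) p).det ≠ 0 := by
    rw [hprodl, map_list_prod]
    rw [← Matrix.coe_detMonoidHom, MonoidHom.map_list_prod, List.map_map]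
    apply List.prod_ne_zero
    intro hx
    rw [List.map_map, List.mem_map] at hx
    obtain ⟨r, hr, hxr⟩ := hx
    have hroot : p.eval r = 0 := by
      have : r ∈ p.roots := by rw [hl] at hr; exact (Multiset.mem_toList).1 hr
      exact (Polynomial.isRoot_of_mem_roots this)
    have hr0 : (r • (1 : Matrix (Fin n) (Fin n) ℂ) - M).det = 0 := by
      rw [← my_eval_charpoly]; exact hroot
    apply h r hr0
    have heq : aeval (-Mᴴ) (Polynomial.X - C r) = -Mᴴ - r • (1 : Matrix (Fin n) (Fin n) ℂ) := by
      simp [Algebra.algebraMap_eq_smul_one]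
    simpa [Function.comp, heq, Matrix.coe_detMonoidHom] using hxr
  have hunit : IsUnit (aeval (-Mᴴ) p).det := isUnit_iff_ne_zero.mpr hdet
  have := congrArg (fun Z => Z * (aeval (-Mᴴ) p)⁻¹) key.symm
  simpa [mul_assoc, Matrix.mul_nonsing_inv _ hunit] using this

end Aux

/-- If the pencils `sE_Δ - A_Δ` and `-sE_Δᴴ - A_Δᴴ` have no common
eigenvalues (including infinity, i.e. `E_Δ` is nonsingular - the infinite eigenvalue
would be common to both pencils otherwise - and no common finite eigenvalue `λ`), then
for any skew-Hermitian `Δ𝓔` and Hermitian `Δ𝓐` there is a unique `Y` with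
`A_Δ Y + Yᴴ A_Δᴴ = -Δ𝓐` and `E_Δ Y - Yᴴ E_Δᴴ = -Δ𝓔`. -/
theorem unique_solution_coupled_sylvester (n : ℕ)
    (AΔ EΔ : Matrix (Fin n) (Fin n) ℂ)
    (hinf : EΔ.det ≠ 0)
    (hfin : ∀ lam : ℂ, ¬((lam • EΔ - AΔ).det = 0 ∧ (lam • (-EΔᴴ) - AΔᴴ).det = 0))
    (Δ𝓔 Δ𝓐 : Matrix (Fin n) (Fin n) ℂ)
    (hΔ𝓔 : Δ𝓔ᴴ = -Δ𝓔) (hΔ𝓐 : Δ𝓐ᴴ = Δ𝓐) :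
    ∃! Y : Matrix (Fin n) (Fin n) ℂ,
      AΔ * Y + Yᴴ * AΔᴴ = -Δ𝓐 ∧ EΔ * Y - Yᴴ * EΔᴴ = -Δ𝓔 := by
  have hE : IsUnit EΔ.det := isUnit_iff_ne_zero.mpr hinf
  have hEEi : EΔ * EΔ⁻¹ = 1 := Matrix.mul_nonsing_inv _ hE
  have hEiE : EΔ⁻¹ * EΔ = 1 := Matrix.nonsing_inv_mul _ hE
  set M : Matrix (Fin n) (Fin n) ℂ := AΔ * EΔ⁻¹ with hM
  -- spectral hypothesis for the Sylvester operator
  have hspec : ∀ μ : ℂ, (μ • (1 : Matrix (Fin n) (Fin n) ℂ) - M).det = 0 →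
      ((-Mᴴ) - μ • (1 : Matrix (Fin n) (Fin n) ℂ)).det ≠ 0 := by
    intro μ hμ
    have hfact1 : μ • (1 : Matrix (Fin n) (Fin n) ℂ) - M = (μ • EΔ - AΔ) * EΔ⁻¹ := by
      rw [Matrix.sub_mul, Matrix.smul_mul, hEEi, hM]
    have h1 : (μ • EΔ - AΔ).det = 0 := by
      rw [hfact1, Matrix.det_mul] at hμ
      rcases mul_eq_zero.mp hμ with h | h
      · exact h
      · exact absurd h (Matrix.isUnit_nonsing_inv_det _ hE).ne_zero
    have h2 : (μ • (-EΔᴴ) - AΔᴴ).det ≠ 0 := fun h => hfin μ ⟨h1, h⟩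
    have hfact2 : (-Mᴴ) - μ • (1 : Matrix (Fin n) (Fin n) ℂ)
        = (EΔ⁻¹)ᴴ * (μ • (-EΔᴴ) - AΔᴴ) := by
      rw [Matrix.mul_sub, Matrix.mul_smul, Matrix.mul_neg, ← conjTranspose_mul, hEEi,
        conjTranspose_one, hM, conjTranspose_mul, smul_neg]
      abel
    intro hcon
    rw [hfact2, Matrix.det_mul] at hcon
    rcases mul_eq_zero.mp hcon with h | h
    · rw [Matrix.det_conjTranspose] at h
      exact (Matrix.isUnit_nonsing_inv_det _ hE).ne_zero (by
        have := congrArg (starRingEnd ℂ) h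
        simpa using this)
    · exact h2 h
  -- the Sylvester operator as a linear map
  let L : Matrix (Fin n) (Fin n) ℂ →ₗ[ℂ] Matrix (Fin n) (Fin n) ℂ :=
    { toFun := fun X => M * X + X * Mᴴ
      map_add' := fun X Y => by simp [Matrix.mul_add, Matrix.add_mul]; abel
      map_smul' := fun c X => by simp [Matrix.mul_smul, Matrix.smul_mul, smul_add] }
  have hLapply : ∀ X, L X = M * X + X * Mᴴ := fun X => rfl
  have hinj : Function.Injective L := by
    intro X Y hXY
    have h0 : L (X - Y) = 0 := by rw [map_sub, hXY, sub_self]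
    rw [hLapply] at h0
    have := sylvester_injective M hspec (X - Y) h0
    exact sub_eq_zero.mp this
  have hsurj : Function.Surjective L := LinearMap.injective_iff_surjective.mp hinj
  -- solve for the Hermitian part
  set C0 : Matrix (Fin n) (Fin n) ℂ :=
    -Δ𝓐 + (2 : ℂ)⁻¹ • (M * Δ𝓔 - Δ𝓔 * Mᴴ) with hC0
  have hC0herm : C0ᴴ = C0 := by
    rw [hC0]
    simp only [conjTranspose_add, conjTranspose_neg, hΔ𝓐, conjTranspose_smul,
      conjTranspose_sub, conjTranspose_mul, conjTranspose_conjTranspose, hΔ𝓔]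
    rw [show (star (2⁻¹ : ℂ)) = (2⁻¹ : ℂ) by simp]
    rw [Matrix.neg_mul, Matrix.mul_neg]
    module
  obtain ⟨H, hH⟩ := hsurj C0
  rw [hLapply] at hH
  have hHherm : Hᴴ = H := by
    apply hinj
    rw [hLapply, hLapply, hH]
    rw [← hC0herm, ← hH]
    simp [conjTranspose_add, conjTranspose_mul]
    abel
  set W : Matrix (Fin n) (Fin n) ℂ := H - (2 : ℂ)⁻¹ • Δ𝓔 with hW
  have hWherm : Wᴴ = H + (2 : ℂ)⁻¹ • Δ𝓔 := by
    rw [hW]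
    simp [conjTranspose_sub, conjTranspose_smul, hHherm, hΔ𝓔, sub_neg_eq_add]
  have h1 : AΔ * (EΔ⁻¹ * W) + (EΔ⁻¹ * W)ᴴ * AΔᴴ = -Δ𝓐 := by
    have hAY : AΔ * (EΔ⁻¹ * W) = M * W := by rw [hM, mul_assoc]
    have hconj : (EΔ⁻¹ * W)ᴴ * AΔᴴ = Wᴴ * Mᴴ := by
      rw [← conjTranspose_mul, ← conjTranspose_mul, hAY, mul_assoc]
    rw [hAY, hconj, hWherm, hW]
    rw [Matrix.mul_sub, Matrix.add_mul, Matrix.mul_smul, Matrix.smul_mul]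
    have : M * H - (2:ℂ)⁻¹ • (M * Δ𝓔) + (H * Mᴴ + (2:ℂ)⁻¹ • (Δ𝓔 * Mᴴ))
        = (M * H + H * Mᴴ) - (2:ℂ)⁻¹ • (M * Δ𝓔 - Δ𝓔 * Mᴴ) := by
      module
    rw [this, hH, hC0]
    module
  have h2 : EΔ * (EΔ⁻¹ * W) - (EΔ⁻¹ * W)ᴴ * EΔᴴ = -Δ𝓔 := by
    have hEY : EΔ * (EΔ⁻¹ * W) = W := by rw [← mul_assoc, hEEi, one_mul]
    have hconj : (EΔ⁻¹ * W)ᴴ * EΔᴴ = Wᴴ := by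
      rw [← conjTranspose_mul, hEY]
    rw [hEY, hconj, hWherm, hW]
    module
  refine ⟨EΔ⁻¹ * W, ⟨h1, h2⟩, ?_⟩
  · -- uniqueness
    rintro Y' ⟨h1', h2'⟩
    set Y : Matrix (Fin n) (Fin n) ℂ := EΔ⁻¹ * W with hY
    have hA0 : AΔ * (Y' - Y) + (Y' - Y)ᴴ * AΔᴴ = 0 := by
      rw [conjTranspose_sub, Matrix.mul_sub, Matrix.sub_mul]
      have : AΔ * Y' - AΔ * Y + (Y'ᴴ * AΔᴴ - Yᴴ * AΔᴴ)
          = (AΔ * Y' + Y'ᴴ * AΔᴴ) - (AΔ * Y + Yᴴ * AΔᴴ) := by abel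
      rw [this, h1', h1, sub_self]
    have hE0 : EΔ * (Y' - Y) - (Y' - Y)ᴴ * EΔᴴ = 0 := by
      rw [conjTranspose_sub, Matrix.mul_sub, Matrix.sub_mul]
      have : EΔ * Y' - EΔ * Y - (Y'ᴴ * EΔᴴ - Yᴴ * EΔᴴ)
          = (EΔ * Y' - Y'ᴴ * EΔᴴ) - (EΔ * Y - Yᴴ * EΔᴴ) := by abel
      rw [this, h2', h2, sub_self]
    set Z : Matrix (Fin n) (Fin n) ℂ := EΔ * (Y' - Y) with hZ
    have hZherm : (Y' - Y)ᴴ * EΔᴴ = Z := by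
      rw [hZ]; rw [sub_eq_zero] at hE0; exact hE0.symm
    have hMZ : M * Z = AΔ * (Y' - Y) := by
      rw [hM, hZ, mul_assoc, ← mul_assoc EΔ⁻¹, hEiE, one_mul]
    have hZM : Z * Mᴴ = (Y' - Y)ᴴ * AΔᴴ := by
      rw [← hZherm, hM, conjTranspose_mul, mul_assoc, ← mul_assoc EΔᴴ,
        ← conjTranspose_mul, hEiE, conjTranspose_one, one_mul]
    have hLZ : M * Z + Z * Mᴴ = 0 := by rw [hMZ, hZM, hA0]
    have hZ0 : Z = 0 := sylvester_injective M hspec Z hLZ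
    have : Y' - Y = 0 := by
      have := congrArg (fun W => EΔ⁻¹ * W) hZ0
      simpa [hZ, ← mul_assoc, hEiE] using this
    exact sub_eq_zero.mp this
end
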